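/- Let A = (a₁ ≥ a₂ ≥ ⋯ ≥ a_r ≥ 1) be a partition of ℓ with r ≥ 2 parts, with blocks U₁,…,U_r of [ℓ], and let τ be any partition of ℓ. Then the number of sequences (P₁,…,P_{r−1}) of partitions satisfying P₁ ∈ S^τ_{a₁}, P_i ∈ S^{P_{i−1}}_{a_i} for 2 ≤ i ≤ r−1, and P_{r−1} = (1,1,…,1) (a_r parts equal to 1) is equal to the number of standard Young tableaux M of shape τ such that for each 1 ≤ j ≤ r, whenever j₁ < j₂ both lie in U_j, the row of M containing j₁ is strictly above the row containing j₂. -/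

import Mathlib

/-- `StepSet τ j σ` : σ is obtained from the partition (Young diagram) τ by decreasing
exactly `j` distinct parts of τ by 1; equivalently `|σ| + j = |τ|` and
`τᵢ - 1 ≤ σᵢ ≤ τᵢ` for every row `i`.  This is the set `S^τ_j` of the paper. -/
def StepSet (τ : YoungDiagram) (j : ℕ) (σ : YoungDiagram) : Prop :=
  σ.card + j = τ.card ∧ ∀ i, σ.rowLen i ≤ τ.rowLen i ∧ τ.rowLen i ≤ σ.rowLen i + 1

/-- The Young diagram is a single column `(1,1,…,1)` with `m` parts equal to 1. -/
def IsColumn (m : ℕ) (σ : YoungDiagram) : Prop :=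
  ∀ i, σ.rowLen i = if i < m then 1 else 0

/-- `T` is a standard Young tableau of shape `μ`: entries strictly increase along
rows and down columns, vanish outside `μ`, and the entries on the cells of `μ`
are exactly `1, …, μ.card`, each used exactly once. -/
def IsSYT (μ : YoungDiagram) (T : ℕ → ℕ → ℕ) : Prop :=
  (∀ i j1 j2, j1 < j2 → (i, j2) ∈ μ → T i j1 < T i j2) ∧
  (∀ i1 i2 j, i1 < i2 → (i2, j) ∈ μ → T i1 j < T i2 j) ∧
  (∀ i j, (i, j) ∉ μ → T i j = 0) ∧
  μ.cells.image (fun c => T c.1 c.2) = Finset.Icc 1 μ.card ∧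
  Set.InjOn (fun c : ℕ × ℕ => T c.1 c.2) ↑μ.cells

/-- The `j`-th (0-indexed) block of `[ℓ] = {1, …, ℓ}` determined by a partition `A`:
`Block A j = {A 0 + ⋯ + A (j-1) + 1, …, A 0 + ⋯ + A j}`. -/
def Block (A : ℕ → ℕ) (j : ℕ) : Finset ℕ :=
  Finset.Ioc (∑ i ∈ Finset.range j, A i) (∑ i ∈ Finset.range (j + 1), A i)

/-- For each block `Block A j` (`j < r`), entries of the block occur in strictly
increasing rows of the tableau `T` of shape `μ`. -/
def BlockRowCond (r : ℕ) (A : ℕ → ℕ) (μ : YoungDiagram) (T : ℕ → ℕ → ℕ) : Prop :=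
  ∀ j < r, ∀ m₁ ∈ Block A j, ∀ m₂ ∈ Block A j, m₁ < m₂ →
    ∀ c₁ ∈ μ.cells, ∀ c₂ ∈ μ.cells, T c₁.1 c₁.2 = m₁ → T c₂.1 c₂.2 = m₂ → c₁.1 < c₂.1

/-- The set `R^ℓ_{A,B}` of the paper, encoded as triples `(P, Q, τ)` where the
sequences `P` and `Q` are 0-indexed (so `P 0` is the paper's `P₁`, etc.). -/
def RSet (ℓ k r q : ℕ) (A B : ℕ → ℕ) :
    Set ((Fin (r - 1) → YoungDiagram) × (Fin (q - 1) → YoungDiagram) × YoungDiagram) :=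
  {x | x.2.2.card = ℓ ∧ x.2.2.colLen 0 ≤ k ∧ x.2.2.rowLen 0 ≤ min r q ∧
    (∀ i : Fin (r - 1), (i : ℕ) = 0 → StepSet x.2.2 (A 0) (x.1 i)) ∧
    (∀ i i' : Fin (r - 1), (i' : ℕ) = (i : ℕ) + 1 →
      StepSet (x.1 i) (A (i' : ℕ)) (x.1 i')) ∧
    (∀ i : Fin (r - 1), (i : ℕ) = r - 2 → IsColumn (A (r - 1)) (x.1 i)) ∧
    (∀ i : Fin (q - 1), (i : ℕ) = 0 → StepSet x.2.2 (B 0) (x.2.1 i)) ∧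
    (∀ i i' : Fin (q - 1), (i' : ℕ) = (i : ℕ) + 1 →
      StepSet (x.2.1 i) (B (i' : ℕ)) (x.2.1 i')) ∧
    (∀ i : Fin (q - 1), (i : ℕ) = q - 2 → IsColumn (B (q - 1)) (x.2.1 i))}

/-- The set `S^ℓ_{A,B}` of the paper: pairs `(M, N)` of standard Young tableaux of the
same shape `μ` with `ℓ` boxes, at most `k` rows, first row of length at most `min r q`,
`M` satisfying the row condition for the blocks `U_j` of `A`,
and `N` satisfying the row condition for the blocks `V_j` of `B`. -/
def SYTPairSet (ℓ k r q : ℕ) (A B : ℕ → ℕ) :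
    Set (YoungDiagram × (ℕ → ℕ → ℕ) × (ℕ → ℕ → ℕ)) :=
  {x | x.1.card = ℓ ∧ x.1.colLen 0 ≤ k ∧ x.1.rowLen 0 ≤ min r q ∧
    IsSYT x.1 x.2.1 ∧ IsSYT x.1 x.2.2 ∧
    BlockRowCond r A x.1 x.2.1 ∧ BlockRowCond q B x.1 x.2.2}

/-- The set `W^ℓ_{A,B}` of the paper: permutations `w` of `[ℓ] = {1, …, ℓ}` (extended by
the identity off `[ℓ]`) with no decreasing subsequence of length `k + 1`, such that for
`j₁ < j₂` in a common block `U_j` of `A`, `j₂` occurs in an earlier position than `j₁`,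
and for `j₁ < j₂` in a common block `V_j` of `B`, `w j₁ > w j₂`. -/
def WSet (ℓ k r q : ℕ) (A B : ℕ → ℕ) : Set (ℕ → ℕ) :=
  {w | Set.BijOn w (Set.Icc 1 ℓ) (Set.Icc 1 ℓ) ∧ (∀ m, m ∉ Set.Icc 1 ℓ → w m = m) ∧
    (∀ s : Fin (k + 1) → ℕ, StrictMono s → (∀ i, s i ∈ Set.Icc 1 ℓ) →
      ¬ StrictAnti (fun i => w (s i))) ∧
    (∀ j < r, ∀ m₁ ∈ Block A j, ∀ m₂ ∈ Block A j, m₁ < m₂ →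
      ∀ p₁ ∈ Set.Icc 1 ℓ, ∀ p₂ ∈ Set.Icc 1 ℓ, w p₁ = m₁ → w p₂ = m₂ → p₂ < p₁) ∧
    (∀ j < q, ∀ p₁ ∈ Block B j, ∀ p₂ ∈ Block B j, p₁ < p₂ → w p₂ < w p₁)}

namespace Aux

open scoped Classical

lemma yd_ext {μ ν : YoungDiagram} (h : ∀ i, μ.rowLen i = ν.rowLen i) : μ = ν := by
  ext ⟨i, j⟩
  simp only [YoungDiagram.mem_cells, YoungDiagram.mem_iff_lt_rowLen, h]

lemma rowLen_eq_zero {μ : YoungDiagram} {i : ℕ} (h : μ.colLen 0 ≤ i) : μ.rowLen i = 0 := by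
  by_contra hne
  have : (i, 0) ∈ μ := YoungDiagram.mem_iff_lt_rowLen.2 (Nat.pos_of_ne_zero hne)
  rw [YoungDiagram.mem_iff_lt_colLen] at this
  omega

lemma colLen_le_of_rowLen_zero {μ : YoungDiagram} {n : ℕ} (h : μ.rowLen n = 0) :
    μ.colLen 0 ≤ n := by
  by_contra hlt
  have : (n, 0) ∈ μ := YoungDiagram.mem_iff_lt_colLen.2 (by omega)
  rw [YoungDiagram.mem_iff_lt_rowLen, h] at this
  omega

lemma card_eq_sum_rowLen (μ : YoungDiagram) {n : ℕ} (h : μ.colLen 0 ≤ n) :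
    μ.card = ∑ i ∈ Finset.range n, μ.rowLen i := by
  have hcells : μ.cells = (Finset.range n).biUnion μ.row := by
    ext ⟨i, j⟩
    simp only [Finset.mem_biUnion, Finset.mem_range, YoungDiagram.mem_row_iff]
    constructor
    · intro hm
      refine ⟨i, ?_, (YoungDiagram.mem_cells _).1 hm, rfl⟩
      have := YoungDiagram.mem_iff_lt_colLen.1 (μ.up_left_mem le_rfl (Nat.zero_le _)
        ((YoungDiagram.mem_cells _).1 hm))
      omega
    · rintro ⟨i', _, hm, rfl⟩; exact (YoungDiagram.mem_cells _).2 hm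
  rw [YoungDiagram.card, hcells, Finset.card_biUnion]
  · exact Finset.sum_congr rfl fun i _ => (μ.rowLen_eq_card).symm
  · intro a _ b _ hab
    simp only [Finset.disjoint_left, YoungDiagram.mem_row_iff]
    rintro ⟨i, j⟩ ⟨_, rfl⟩ ⟨_, h2⟩
    exact hab h2

lemma finite_le (τ : YoungDiagram) : {σ : YoungDiagram | σ ≤ τ}.Finite := by
  have himg : YoungDiagram.cells '' {σ : YoungDiagram | σ ≤ τ} ⊆ ↑τ.cells.powerset := by
    rintro _ ⟨σ, hσ, rfl⟩
    simp only [Finset.coe_powerset, Set.mem_preimage, Set.mem_powerset_iff, Finset.coe_subset]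
    exact YoungDiagram.cells_subset_iff.2 hσ
  have : (YoungDiagram.cells '' {σ : YoungDiagram | σ ≤ τ}).Finite :=
    Set.Finite.subset (τ.cells.powerset.finite_toSet) himg
  exact Set.Finite.of_finite_image this (fun a _ b _ hab => YoungDiagram.ext hab)

lemma stepSet_le {τ σ : YoungDiagram} {a : ℕ} (h : StepSet τ a σ) : σ ≤ τ := by
  intro ⟨i, j⟩ hm
  rw [YoungDiagram.mem_iff_lt_rowLen] at hm ⊢
  exact lt_of_lt_of_le hm (h.2 i).1

lemma stepSet_finite (τ : YoungDiagram) (a : ℕ) : {σ | StepSet τ a σ}.Finite :=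
  (finite_le τ).subset fun _ h => stepSet_le h

lemma exists_bijOn {α β : Type*} [Nonempty β] {s : Set α} {t : Set β}
    (hs : s.Finite) (ht : t.Finite) (h : s.ncard = t.ncard) :
    ∃ f : α → β, Set.BijOn f s t := by
  apply Set.Finite.exists_bijOn_of_encard_eq hs
  rw [hs.encard_eq_coe_toFinset_card, ht.encard_eq_coe_toFinset_card,
    ← Set.ncard_eq_toFinset_card _ hs, ← Set.ncard_eq_toFinset_card _ ht, h]

lemma bijOn_ncard {α β : Type*} {s : Set α} {t : Set β} {f : α → β}
    (h : Set.BijOn f s t) : s.ncard = t.ncard := by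
  rw [← h.image_eq, Set.ncard_image_of_injOn h.injOn]

lemma bot_rowLen (i : ℕ) : (⊥ : YoungDiagram).rowLen i = 0 := by
  by_contra h
  have : (i, 0) ∈ (⊥ : YoungDiagram) := YoungDiagram.mem_iff_lt_rowLen.2 (Nat.pos_of_ne_zero h)
  exact YoungDiagram.notMem_bot _ this

lemma bot_card : (⊥ : YoungDiagram).card = 0 := by
  simp [YoungDiagram.card]

lemma rowLen_pos_iff {μ : YoungDiagram} {i : ℕ} : 0 < μ.rowLen i ↔ i < μ.colLen 0 := by
  rw [← YoungDiagram.mem_iff_lt_rowLen, YoungDiagram.mem_iff_lt_colLen]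

lemma isColumn_iff_stepSet_bot {m : ℕ} {P : YoungDiagram} :
    IsColumn m P ↔ StepSet P m ⊥ := by
  constructor
  · intro h
    have h1 : ∀ i, P.rowLen i ≤ 1 := fun i => by rw [h i]; split <;> omega
    have hm : P.rowLen m = 0 := by rw [h m]; simp
    have hcol : P.colLen 0 ≤ m := colLen_le_of_rowLen_zero hm
    have hcard : P.card = m := by
      rw [card_eq_sum_rowLen P hcol, Finset.sum_congr rfl (fun i _ => h i),
        Finset.sum_ite_of_true (fun i hi => Finset.mem_range.1 hi), Finset.sum_const,
        Finset.card_range, smul_eq_mul, mul_one]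
    refine ⟨by rw [bot_card]; omega, fun i => ⟨by rw [bot_rowLen]; omega, by rw [bot_rowLen, h i]; split <;> omega⟩⟩
  · rintro ⟨hcard, hrow⟩
    have h1 : ∀ i, P.rowLen i ≤ 1 := fun i => by have := (hrow i).2; rw [bot_rowLen] at this; omega
    rw [bot_card] at hcard
    have hcol : P.card = P.colLen 0 := by
      rw [card_eq_sum_rowLen P le_rfl,
        Finset.sum_congr rfl (fun i hi => show P.rowLen i = 1 by
          have h2 : 0 < P.rowLen i := rowLen_pos_iff.2 (Finset.mem_range.1 hi)
          have := h1 i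
          omega), Finset.sum_const, Finset.card_range, smul_eq_mul, mul_one]
    intro i
    have hcm : P.colLen 0 = m := by omega
    by_cases h : i < m
    · have : 0 < P.rowLen i := rowLen_pos_iff.2 (by omega)
      have := h1 i
      simp only [if_pos h]
      omega
    · simp only [if_neg h]
      exact rowLen_eq_zero (by omega)

lemma sorted_map_range {f : ℕ → ℕ} (hmono : ∀ i j : ℕ, i ≤ j → f j ≤ f i) (n : ℕ) :
    ((List.range n).map f).Pairwise (· ≥ ·) :=
  (List.pairwise_le_range).map _ (fun a b hab => hmono a b hab)

/-- Build a Young diagram from a row-length function. -/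
noncomputable def mkYD (f : ℕ → ℕ) : YoungDiagram :=
  if h : (∀ i j : ℕ, i ≤ j → f j ≤ f i) ∧ ∃ n, ∀ i, n ≤ i → f i = 0 then
    YoungDiagram.ofRowLens ((List.range h.2.choose).map f) (sorted_map_range h.1 _).sortedGE
  else ⊥

lemma rowLen_mkYD {f : ℕ → ℕ} (hmono : ∀ i j : ℕ, i ≤ j → f j ≤ f i)
    (hvan : ∃ n, ∀ i, n ≤ i → f i = 0) : ∀ i, (mkYD f).rowLen i = f i := by
  intro i
  have h : (∀ i j : ℕ, i ≤ j → f j ≤ f i) ∧ ∃ n, ∀ i, n ≤ i → f i = 0 := ⟨hmono, hvan⟩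
  rw [mkYD, dif_pos h]
  set n := h.2.choose with hn
  have hspec : ∀ i, n ≤ i → f i = 0 := h.2.choose_spec
  by_cases hin : i < n
  · have := YoungDiagram.rowLen_ofRowLens (w := (List.range n).map f)
      (hw := (sorted_map_range h.1 n).sortedGE) ⟨i, by simpa using hin⟩
    simpa using this
  · push_neg at hin
    rw [hspec i hin]
    -- rowLen is 0 since (i,0) is not a cell
    by_contra hne
    have hmem : (i, 0) ∈ YoungDiagram.ofRowLens ((List.range n).map f) _ :=
      YoungDiagram.mem_iff_lt_rowLen.2 (Nat.pos_of_ne_zero hne)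
    rw [YoungDiagram.mem_ofRowLens] at hmem
    obtain ⟨h1, -⟩ := hmem
    simp at h1
    omega

section Mid

variable (τ ρ : YoungDiagram)

def Free (i : ℕ) : Prop := τ.rowLen i = ρ.rowLen i + 1

def Link (i : ℕ) : Prop := Free τ ρ i ∧ Free τ ρ (i + 1) ∧ ρ.rowLen i = ρ.rowLen (i + 1)

lemma exists_lo (i : ℕ) : ∃ j, j ≤ i ∧ ∀ m, j ≤ m → m < i → Link τ ρ m :=
  ⟨i, le_rfl, fun m h1 h2 => by omega⟩

noncomputable def lo (i : ℕ) : ℕ := Nat.find (exists_lo τ ρ i)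

lemma exists_hi (i : ℕ) : ∃ j, i ≤ j ∧ ¬Link τ ρ j := by
  refine ⟨max i (τ.colLen 0), le_max_left _ _, fun hl => ?_⟩
  have h1 : 0 < τ.rowLen (max i (τ.colLen 0)) := by
    rw [hl.1]; omega
  rw [rowLen_pos_iff] at h1
  omega

noncomputable def hi (i : ℕ) : ℕ := Nat.find (exists_hi τ ρ i)

noncomputable def mir (i : ℕ) : ℕ := lo τ ρ i + hi τ ρ i - i

variable {τ ρ}

lemma lo_le (i : ℕ) : lo τ ρ i ≤ i := (Nat.find_spec (exists_lo τ ρ i)).1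

lemma le_hi (i : ℕ) : i ≤ hi τ ρ i := (Nat.find_spec (exists_hi τ ρ i)).1

lemma not_link_hi (i : ℕ) : ¬Link τ ρ (hi τ ρ i) := (Nat.find_spec (exists_hi τ ρ i)).2

lemma link_of_lo_le {i m : ℕ} (h1 : lo τ ρ i ≤ m) (h2 : m < i) : Link τ ρ m :=
  (Nat.find_spec (exists_lo τ ρ i)).2 m h1 h2

lemma link_of_lt_hi {i m : ℕ} (h1 : i ≤ m) (h2 : m < hi τ ρ i) : Link τ ρ m := by
  have := Nat.find_min (exists_hi τ ρ i) h2
  push_neg at this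
  exact this h1

lemma link_mem_run {i m : ℕ} (h1 : lo τ ρ i ≤ m) (h2 : m < hi τ ρ i) : Link τ ρ m := by
  rcases lt_or_ge m i with h | h
  · exact link_of_lo_le h1 h
  · exact link_of_lt_hi h h2

lemma not_link_lo_sub {i : ℕ} (h : 0 < lo τ ρ i) : ¬Link τ ρ (lo τ ρ i - 1) := by
  intro hl
  have hmin := Nat.find_min (exists_lo τ ρ i) (show lo τ ρ i - 1 < lo τ ρ i by omega)
  push_neg at hmin
  have hle := lo_le (τ := τ) (ρ := ρ) i
  obtain ⟨m, hm1, hm2, hm3⟩ := hmin (by omega)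
  rcases eq_or_lt_of_le hm1 with heq | hlt
  · exact hm3 (heq ▸ hl)
  · exact hm3 (link_of_lo_le (by omega) hm2)

lemma lo_run_eq {i j : ℕ} (h1 : lo τ ρ i ≤ j) (h2 : j ≤ hi τ ρ i) :
    lo τ ρ j = lo τ ρ i := by
  have hle : lo τ ρ j ≤ lo τ ρ i :=
    Nat.find_min' (exists_lo τ ρ j) ⟨h1, fun m hm1 hm2 => link_mem_run hm1 (by omega)⟩
  rcases eq_or_lt_of_le hle with heq | hlt
  · exact heq
  · exfalso
    have h0 : 0 < lo τ ρ i := by omega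
    exact not_link_lo_sub h0 (link_of_lo_le (i := j) (by omega) (by omega))

lemma hi_run_eq {i j : ℕ} (h1 : lo τ ρ i ≤ j) (h2 : j ≤ hi τ ρ i) :
    hi τ ρ j = hi τ ρ i := by
  have hle : hi τ ρ j ≤ hi τ ρ i :=
    Nat.find_min' (exists_hi τ ρ j) ⟨h2, not_link_hi i⟩
  rcases eq_or_lt_of_le hle with heq | hlt
  · exact heq
  · exfalso
    exact not_link_hi j (link_mem_run (le_trans h1 (le_hi j)) hlt)



lemma p_eq_of_run {i j k : ℕ} (hj : lo τ ρ i ≤ j) (hjk : j ≤ k) (hk : k ≤ hi τ ρ i) :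
    ρ.rowLen j = ρ.rowLen k := by
  induction k, hjk using Nat.le_induction with
  | base => rfl
  | succ k hk' ih =>
    have hl : Link τ ρ k := link_mem_run (τ := τ) (ρ := ρ) (i := i) (by omega) (by omega)
    rw [ih (by omega), hl.2.2]

lemma p_run {i j : ℕ} (h1 : lo τ ρ i ≤ j) (h2 : j ≤ hi τ ρ i) :
    ρ.rowLen j = ρ.rowLen i := by
  have hl := lo_le (τ := τ) (ρ := ρ) i
  have hh := le_hi (τ := τ) (ρ := ρ) i
  rcases le_total i j with h | h
  · exact (p_eq_of_run hl h h2).symm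
  · exact p_eq_of_run h1 h hh

lemma free_mem_run {i j : ℕ} (hf : Free τ ρ i) (h1 : lo τ ρ i ≤ j) (h2 : j ≤ hi τ ρ i) :
    Free τ ρ j := by
  have hl := lo_le (τ := τ) (ρ := ρ) i
  have hh := le_hi (τ := τ) (ρ := ρ) i
  rcases lt_trichotomy j i with h | h | h
  · exact (link_of_lo_le h1 h).1
  · rwa [← h] at hf
  · have hlk := link_mem_run (τ := τ) (ρ := ρ) (i := i) (m := j - 1) (by omega) (by omega)
    have := hlk.2.1
    rwa [show j - 1 + 1 = j by omega] at this

lemma mir_lo_hi (i : ℕ) : lo τ ρ i ≤ mir τ ρ i ∧ mir τ ρ i ≤ hi τ ρ i := by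
  have hl := lo_le (τ := τ) (ρ := ρ) i
  have hh := le_hi (τ := τ) (ρ := ρ) i
  unfold mir
  omega

lemma mir_mir (i : ℕ) : mir τ ρ (mir τ ρ i) = i := by
  have hl := lo_le (τ := τ) (ρ := ρ) i
  have hh := le_hi (τ := τ) (ρ := ρ) i
  have h1 := (mir_lo_hi (τ := τ) (ρ := ρ) i).1
  have h2 := (mir_lo_hi (τ := τ) (ρ := ρ) i).2
  have hlo := lo_run_eq (τ := τ) (ρ := ρ) (i := i) h1 h2
  have hhi := hi_run_eq (τ := τ) (ρ := ρ) (i := i) h1 h2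
  unfold mir at *
  omega

lemma hi_pos_of_link {m : ℕ} (hl : Link τ ρ m) : m + 1 ≤ hi τ ρ m := by
  have hh := le_hi (τ := τ) (ρ := ρ) m
  rcases eq_or_lt_of_le hh with heq | hlt
  · exact absurd (heq ▸ hl) (not_link_hi m)
  · omega

lemma mir_succ_of_link {m : ℕ} (hl : Link τ ρ m) :
    mir τ ρ (m + 1) + 1 = mir τ ρ m := by
  have hl1 := lo_le (τ := τ) (ρ := ρ) m
  have hh1 := hi_pos_of_link hl
  have hlo := lo_run_eq (τ := τ) (ρ := ρ) (i := m) (j := m + 1) (by omega) hh1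
  have hhi := hi_run_eq (τ := τ) (ρ := ρ) (i := m) (j := m + 1) (by omega) hh1
  unfold mir
  rw [hlo, hhi]
  omega

variable (τ ρ) in
noncomputable def midFn (σ : YoungDiagram) (i : ℕ) : ℕ :=
  if Free τ ρ i then 2 * ρ.rowLen i + 1 - σ.rowLen (mir τ ρ i) else σ.rowLen i

variable (τ ρ) in
noncomputable def midMap (σ : YoungDiagram) : YoungDiagram := mkYD (midFn τ ρ σ)

variable (τ ρ) in
def Bnds (σ : YoungDiagram) : Prop :=
  ∀ i, ρ.rowLen i ≤ σ.rowLen i ∧ σ.rowLen i ≤ ρ.rowLen i + 1 ∧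
    σ.rowLen i ≤ τ.rowLen i ∧ τ.rowLen i ≤ σ.rowLen i + 1

lemma free_mir {i : ℕ} (hf : Free τ ρ i) : Free τ ρ (mir τ ρ i) :=
  free_mem_run hf (mir_lo_hi i).1 (mir_lo_hi i).2

lemma p_mir (i : ℕ) : ρ.rowLen (mir τ ρ i) = ρ.rowLen i :=
  p_run (mir_lo_hi i).1 (mir_lo_hi i).2

lemma midFn_bnd {σ : YoungDiagram} (hσ : Bnds τ ρ σ) (i : ℕ) :
    ρ.rowLen i ≤ midFn τ ρ σ i ∧ midFn τ ρ σ i ≤ ρ.rowLen i + 1 ∧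
      midFn τ ρ σ i ≤ τ.rowLen i ∧ τ.rowLen i ≤ midFn τ ρ σ i + 1 := by
  unfold midFn
  by_cases hf : Free τ ρ i
  · rw [if_pos hf]
    have h1 := hσ (mir τ ρ i)
    have h2 := p_mir (τ := τ) (ρ := ρ) i
    have h3 : τ.rowLen i = ρ.rowLen i + 1 := hf
    omega
  · rw [if_neg hf]
    have h1 := hσ i
    have h3 : τ.rowLen i ≠ ρ.rowLen i + 1 := hf
    omega

lemma midFn_anti {σ : YoungDiagram} (hσ : Bnds τ ρ σ) :
    ∀ i j : ℕ, i ≤ j → midFn τ ρ σ j ≤ midFn τ ρ σ i := by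
  have hadj : ∀ m, midFn τ ρ σ (m + 1) ≤ midFn τ ρ σ m := by
    intro m
    by_cases hl : Link τ ρ m
    · have hf1 : Free τ ρ m := hl.1
      have hf2 : Free τ ρ (m + 1) := hl.2.1
      unfold midFn
      rw [if_pos hf1, if_pos hf2]
      have hp : ρ.rowLen m = ρ.rowLen (m + 1) := hl.2.2
      have hm : mir τ ρ (m + 1) + 1 = mir τ ρ m := mir_succ_of_link hl
      have hs : σ.rowLen (mir τ ρ m) ≤ σ.rowLen (mir τ ρ (m + 1)) :=
        σ.rowLen_anti _ _ (by omega)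
      have hb1 := hσ (mir τ ρ m)
      have hb2 := hσ (mir τ ρ (m + 1))
      have hp1 := p_mir (τ := τ) (ρ := ρ) m
      have hp2 := p_mir (τ := τ) (ρ := ρ) (m + 1)
      omega
    · have h1 := midFn_bnd (τ := τ) (ρ := ρ) hσ m
      have h2 := midFn_bnd (τ := τ) (ρ := ρ) hσ (m + 1)
      have ht := τ.rowLen_anti m (m + 1) (by omega)
      have hp := ρ.rowLen_anti m (m + 1) (by omega)
      unfold Link Free at hl
      omega
  intro i j hij
  induction j, hij using Nat.le_induction with
  | base => exact le_refl _
  | succ k hk ih => exact le_trans (hadj k) ih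

lemma midFn_vanish {σ : YoungDiagram} (hσ : Bnds τ ρ σ) :
    ∀ i, τ.colLen 0 ≤ i → midFn τ ρ σ i = 0 := by
  intro i hi
  have ht : τ.rowLen i = 0 := rowLen_eq_zero hi
  have := midFn_bnd (τ := τ) (ρ := ρ) hσ i
  omega

lemma rowLen_midMap {σ : YoungDiagram} (hσ : Bnds τ ρ σ) (i : ℕ) :
    (midMap τ ρ σ).rowLen i = midFn τ ρ σ i :=
  rowLen_mkYD (midFn_anti hσ) ⟨τ.colLen 0, midFn_vanish hσ⟩ i

lemma midMap_bnds {σ : YoungDiagram} (hσ : Bnds τ ρ σ) : Bnds τ ρ (midMap τ ρ σ) := by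
  intro i
  rw [rowLen_midMap hσ]
  exact midFn_bnd hσ i

lemma midMap_invol {σ : YoungDiagram} (hσ : Bnds τ ρ σ) :
    midMap τ ρ (midMap τ ρ σ) = σ := by
  apply yd_ext
  intro i
  rw [rowLen_midMap (midMap_bnds hσ)]
  unfold midFn
  by_cases hf : Free τ ρ i
  · rw [if_pos hf, rowLen_midMap hσ]
    unfold midFn
    rw [if_pos (free_mir hf), mir_mir]
    have h1 := hσ i
    have h2 := p_mir (τ := τ) (ρ := ρ) i
    omega
  · rw [if_neg hf, rowLen_midMap hσ]
    unfold midFn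
    rw [if_neg hf]

lemma colLen_le_of_bnds_left {σ : YoungDiagram} (hσ : ∀ i, σ.rowLen i ≤ τ.rowLen i) :
    σ.colLen 0 ≤ τ.colLen 0 := by
  apply colLen_le_of_rowLen_zero
  have := hσ (τ.colLen 0)
  have h0 : τ.rowLen (τ.colLen 0) = 0 := rowLen_eq_zero le_rfl
  omega

lemma midMap_card {σ : YoungDiagram} (hσ : Bnds τ ρ σ) :
    (midMap τ ρ σ).card + σ.card = ρ.card + τ.card := by
  set N := τ.colLen 0 with hN
  have hσc : σ.colLen 0 ≤ N := colLen_le_of_bnds_left (fun i => (hσ i).2.2.1)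
  have hρc : ρ.colLen 0 ≤ N := by
    apply colLen_le_of_bnds_left (τ := τ)
    intro i
    have := hσ i
    omega
  have hmc : (midMap τ ρ σ).colLen 0 ≤ N :=
    colLen_le_of_bnds_left (fun i => ((midMap_bnds hσ) i).2.2.1)
  rw [card_eq_sum_rowLen (midMap τ ρ σ) hmc, card_eq_sum_rowLen σ hσc,
    card_eq_sum_rowLen ρ hρc, card_eq_sum_rowLen τ le_rfl, ← hN]
  -- pointwise identity with mirrored σ-sum
  set mf : ℕ → ℕ := fun j => if Free τ ρ j then mir τ ρ j else j with hmf
  have hmf_apply : ∀ j, mf j = if Free τ ρ j then mir τ ρ j else j := fun j => rfl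
  have hmirmem : ∀ i ∈ Finset.range N, mf i ∈ Finset.range N := by
    intro i hi
    rw [Finset.mem_range] at hi ⊢
    rw [hmf_apply]
    by_cases hf : Free τ ρ i
    · rw [if_pos hf]
      have hfm : 0 < τ.rowLen (mir τ ρ i) := by
        have := free_mir (τ := τ) (ρ := ρ) hf
        unfold Free at this
        omega
      rw [rowLen_pos_iff] at hfm
      exact hfm
    · rwa [if_neg hf]
  have hmirinv : ∀ i, mf (mf i) = i := by
    intro i
    by_cases hf : Free τ ρ i
    · have h1 : mf i = mir τ ρ i := by rw [hmf_apply, if_pos hf]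
      rw [h1, hmf_apply, if_pos (free_mir hf), mir_mir]
    · have h1 : mf i = i := by rw [hmf_apply, if_neg hf]
      rw [h1, h1]
  have hsum : ∑ i ∈ Finset.range N, σ.rowLen (mf i)
      = ∑ i ∈ Finset.range N, σ.rowLen i := by
    apply Finset.sum_nbij' (i := mf) (j := mf)
    · exact fun a ha => hmirmem a ha
    · exact fun a ha => hmirmem a ha
    · exact fun a _ => hmirinv a
    · exact fun a _ => hmirinv a
    · intro a _
      rfl
  have key : ∀ i, midFn τ ρ σ i + σ.rowLen (mf i)
      = ρ.rowLen i + τ.rowLen i := by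
    intro i
    rw [hmf_apply]
    unfold midFn
    by_cases hf : Free τ ρ i
    · rw [if_pos hf, if_pos hf]
      have h1 := hσ (mir τ ρ i)
      have h2 := p_mir (τ := τ) (ρ := ρ) i
      have h3 : τ.rowLen i = ρ.rowLen i + 1 := hf
      omega
    · rw [if_neg hf, if_neg hf]
      have h1 := hσ i
      have h3 : τ.rowLen i ≠ ρ.rowLen i + 1 := hf
      omega
  have := Finset.sum_congr rfl (fun i (_ : i ∈ Finset.range N) => key i)
  rw [Finset.sum_add_distrib, hsum, Finset.sum_add_distrib] at this
  calc (∑ i ∈ Finset.range N, (midMap τ ρ σ).rowLen i) + ∑ i ∈ Finset.range N, σ.rowLen i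
      = (∑ i ∈ Finset.range N, midFn τ ρ σ i) + ∑ i ∈ Finset.range N, σ.rowLen i := by
        rw [Finset.sum_congr rfl (fun i _ => rowLen_midMap hσ i)]
    _ = (∑ i ∈ Finset.range N, ρ.rowLen i) + ∑ i ∈ Finset.range N, τ.rowLen i := this

lemma mid_symm (τ ρ : YoungDiagram) (a b : ℕ) :
    {σ | StepSet τ a σ ∧ StepSet σ b ρ}.ncard = {σ | StepSet τ b σ ∧ StepSet σ a ρ}.ncard := by
  have key : ∀ x y : ℕ, Set.MapsTo (midMap τ ρ)
      {σ | StepSet τ x σ ∧ StepSet σ y ρ} {σ | StepSet τ y σ ∧ StepSet σ x ρ} := by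
    rintro x y σ ⟨⟨hc1, hb1⟩, ⟨hc2, hb2⟩⟩
    have hσ : Bnds τ ρ σ := fun i =>
      ⟨(hb2 i).1, (hb2 i).2, (hb1 i).1, (hb1 i).2⟩
    have hcard := midMap_card (τ := τ) (ρ := ρ) hσ
    have hbnd := midMap_bnds (τ := τ) (ρ := ρ) hσ
    exact ⟨⟨by omega, fun i => ⟨(hbnd i).2.2.1, (hbnd i).2.2.2⟩⟩,
      ⟨by omega, fun i => ⟨(hbnd i).1, (hbnd i).2.1⟩⟩⟩
  have hbnds : ∀ x y (σ : YoungDiagram), σ ∈ {σ | StepSet τ x σ ∧ StepSet σ y ρ} → Bnds τ ρ σ := by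
    rintro x y σ ⟨⟨hc1, hb1⟩, ⟨hc2, hb2⟩⟩
    exact fun i => ⟨(hb2 i).1, (hb2 i).2, (hb1 i).1, (hb1 i).2⟩
  apply bijOn_ncard (f := midMap τ ρ)
  refine ⟨key a b, ?_, ?_⟩
  · intro σ1 h1 σ2 h2 heq
    rw [← midMap_invol (hbnds a b σ1 h1), heq, midMap_invol (hbnds a b σ2 h2)]
  · intro σ' hσ'
    refine ⟨midMap τ ρ σ', key b a hσ', ?_⟩
    exact midMap_invol (hbnds b a σ' hσ')

end Mid

def IsChainL : List ℕ → YoungDiagram → List YoungDiagram → Prop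
  | [], τ, [] => τ = ⊥
  | a :: L, τ, σ :: S => StepSet τ a σ ∧ IsChainL L σ S
  | _, _, _ => False

def ChainSet (L : List ℕ) (τ : YoungDiagram) : Set (List YoungDiagram) :=
  {S | IsChainL L τ S}

lemma mem_chainSet_nil {τ : YoungDiagram} {S : List YoungDiagram} :
    S ∈ ChainSet [] τ ↔ S = [] ∧ τ = ⊥ := by
  cases S with
  | nil => simp [ChainSet, IsChainL]
  | cons a S =>
    constructor
    · intro h; exact absurd h (fun h => (h : False))
    · rintro ⟨h, -⟩; cases h

lemma mem_chainSet_cons {a : ℕ} {L : List ℕ} {τ : YoungDiagram} {S : List YoungDiagram} :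
    S ∈ ChainSet (a :: L) τ ↔
      ∃ σ T, S = σ :: T ∧ StepSet τ a σ ∧ T ∈ ChainSet L σ := by
  cases S with
  | nil =>
    constructor
    · intro h; exact absurd h (fun h => (h : False))
    · rintro ⟨σ, T, h, -⟩; cases h
  | cons σ T =>
    constructor
    · intro h; exact ⟨σ, T, rfl, h.1, h.2⟩
    · rintro ⟨σ', T', h, h1, h2⟩
      cases h
      exact ⟨h1, h2⟩

lemma chainSet_finite (L : List ℕ) (τ : YoungDiagram) : (ChainSet L τ).Finite := by
  induction L generalizing τ with
  | nil =>
    apply Set.Finite.subset (Set.finite_singleton ([] : List YoungDiagram))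
    intro S hS; exact (mem_chainSet_nil.1 hS).1
  | cons a L ih =>
    have : ChainSet (a :: L) τ ⊆
        ⋃ σ ∈ {σ | StepSet τ a σ}, (σ :: ·) '' ChainSet L σ := by
      intro S hS
      obtain ⟨σ, T, rfl, h1, h2⟩ := mem_chainSet_cons.1 hS
      exact Set.mem_biUnion h1 ⟨T, h2, rfl⟩
    exact Set.Finite.subset ((stepSet_finite τ a).biUnion fun σ _ => (ih σ).image _) this

lemma ncard_chainSet_cons (a : ℕ) (L L' : List ℕ) (τ : YoungDiagram)
    (h : ∀ σ, (ChainSet L σ).ncard = (ChainSet L' σ).ncard) :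
    (ChainSet (a :: L) τ).ncard = (ChainSet (a :: L') τ).ncard := by
  choose g hg using fun σ => exists_bijOn (chainSet_finite L σ) (chainSet_finite L' σ) (h σ)
  apply bijOn_ncard (f := fun S => match S with | [] => [] | σ :: T => σ :: g σ T)
  constructor
  · intro S hS
    obtain ⟨σ, T, rfl, h1, h2⟩ := mem_chainSet_cons.1 hS
    exact mem_chainSet_cons.2 ⟨σ, g σ T, rfl, h1, (hg σ).mapsTo h2⟩
  constructor
  · intro S1 hS1 S2 hS2 heq
    obtain ⟨σ1, T1, rfl, h11, h12⟩ := mem_chainSet_cons.1 hS1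
    obtain ⟨σ2, T2, rfl, h21, h22⟩ := mem_chainSet_cons.1 hS2
    simp only [List.cons.injEq] at heq
    obtain ⟨rfl, heq2⟩ := heq
    rw [(hg σ1).injOn h12 h22 heq2]
  · intro S' hS'
    obtain ⟨σ, T', rfl, h1, h2⟩ := mem_chainSet_cons.1 hS'
    obtain ⟨T, hT, rfl⟩ := (hg σ).surjOn h2
    exact ⟨σ :: T, mem_chainSet_cons.2 ⟨σ, T, rfl, h1, hT⟩, rfl⟩

lemma ncard_chainSet_swap (x y : ℕ) (L : List ℕ) (τ : YoungDiagram) :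
    (ChainSet (x :: y :: L) τ).ncard = (ChainSet (y :: x :: L) τ).ncard := by
  have hfin : ∀ (u v : ℕ) (ρ : YoungDiagram),
      {σ | StepSet τ u σ ∧ StepSet σ v ρ}.Finite := fun u v ρ =>
    (stepSet_finite τ u).subset fun σ hσ => hσ.1
  choose g hg using fun ρ => exists_bijOn (hfin x y ρ) (hfin y x ρ) (mid_symm τ ρ x y)
  apply bijOn_ncard (f := fun S => match S with
    | σ :: ρ :: T => g ρ σ :: ρ :: T
    | S => S)
  constructor
  · intro S hS
    obtain ⟨σ, T0, rfl, h1, h2⟩ := mem_chainSet_cons.1 hS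
    obtain ⟨ρ, T, rfl, h3, h4⟩ := mem_chainSet_cons.1 h2
    have := (hg ρ).mapsTo ⟨h1, h3⟩
    exact mem_chainSet_cons.2 ⟨g ρ σ, ρ :: T, rfl, this.1,
      mem_chainSet_cons.2 ⟨ρ, T, rfl, this.2, h4⟩⟩
  constructor
  · intro S1 hS1 S2 hS2 heq
    obtain ⟨σ1, T0, rfl, h11, h12⟩ := mem_chainSet_cons.1 hS1
    obtain ⟨ρ1, T1, rfl, h13, h14⟩ := mem_chainSet_cons.1 h12
    obtain ⟨σ2, T0', rfl, h21, h22⟩ := mem_chainSet_cons.1 hS2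
    obtain ⟨ρ2, T2, rfl, h23, h24⟩ := mem_chainSet_cons.1 h22
    simp only [List.cons.injEq] at heq
    obtain ⟨heq1, heq2, rfl⟩ := heq
    subst heq2
    rw [(hg ρ1).injOn ⟨h11, h13⟩ ⟨h21, h23⟩ heq1]
  · intro S' hS'
    obtain ⟨σ', T0, rfl, h1, h2⟩ := mem_chainSet_cons.1 hS'
    obtain ⟨ρ, T, rfl, h3, h4⟩ := mem_chainSet_cons.1 h2
    obtain ⟨σ, hσ, rfl⟩ := (hg ρ).surjOn ⟨h1, h3⟩
    exact ⟨σ :: ρ :: T, mem_chainSet_cons.2 ⟨σ, ρ :: T, rfl, hσ.1,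
      mem_chainSet_cons.2 ⟨ρ, T, rfl, hσ.2, h4⟩⟩, rfl⟩

lemma chainSet_perm {L L' : List ℕ} (h : L.Perm L') :
    ∀ τ, (ChainSet L τ).ncard = (ChainSet L' τ).ncard := by
  induction h with
  | nil => intro τ; rfl
  | cons a _ ih => intro τ; exact ncard_chainSet_cons a _ _ τ ih
  | swap x y l => intro τ; exact ncard_chainSet_swap y x l τ
  | trans _ _ ih1 ih2 => intro τ; rw [ih1, ih2]

lemma mem_chainSet_iff {L : List ℕ} {τ : YoungDiagram} {S : List YoungDiagram} :
    S ∈ ChainSet L τ ↔ S.length = L.length ∧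
      (∀ k, k < L.length → StepSet ((τ :: S).getD k ⊥) (L.getD k 0) (S.getD k ⊥)) ∧
      (τ :: S).getD S.length ⊥ = ⊥ := by
  induction L generalizing τ S with
  | nil =>
    rw [mem_chainSet_nil]
    constructor
    · rintro ⟨rfl, rfl⟩; simp
    · rintro ⟨hlen, -, hend⟩
      simp only [List.length_nil] at hlen
      rw [List.length_eq_zero_iff] at hlen
      subst hlen
      simpa using hend
  | cons a L ih =>
    rw [mem_chainSet_cons]
    constructor
    · rintro ⟨σ, T, rfl, hstep, hT⟩
      obtain ⟨hlen, hsteps, hend⟩ := ih.1 hT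
      refine ⟨by simpa using hlen, ?_, by simpa using hend⟩
      intro k hk
      cases k with
      | zero => simpa using hstep
      | succ k => simpa using hsteps k (by simpa using hk)
    · rintro ⟨hlen, hsteps, hend⟩
      cases S with
      | nil => simp at hlen
      | cons σ T =>
        refine ⟨σ, T, rfl, by simpa using hsteps 0 (by simp), ih.2 ⟨by simpa using hlen, ?_, by simpa using hend⟩⟩
        intro k hk
        simpa using hsteps (k + 1) (by simpa using hk)

lemma getD_ofFn_append {n : ℕ} (P : Fin n → YoungDiagram) (k : ℕ) :
    ((List.ofFn P) ++ [⊥]).getD k ⊥ = if h : k < n then P ⟨k, h⟩ else ⊥ := by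
  split
  · next h =>
    rw [List.getD_eq_getElem _ _ (by simp; omega),
      List.getElem_append_left (by simp [h])]
    simp
  · next h =>
    by_cases hk : k = n
    · subst hk
      rw [List.getD_eq_getElem _ _ (by simp),
        List.getElem_append_right (by simp)]
      simp
    · rw [List.getD_eq_default]
      simp; omega

lemma getD_range_map (A : ℕ → ℕ) {r k : ℕ} (h : k < r) :
    ((List.range r).map A).getD k 0 = A k := by
  rw [List.getD_eq_getElem _ _ (by simp [h])]
  simp

lemma lhs_eq_chain (r : ℕ) (A : ℕ → ℕ) (hr : 2 ≤ r) (τ : YoungDiagram) :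
    {P : Fin (r - 1) → YoungDiagram |
        (∀ i : Fin (r - 1), (i : ℕ) = 0 → StepSet τ (A 0) (P i)) ∧
        (∀ i i' : Fin (r - 1), (i' : ℕ) = (i : ℕ) + 1 →
          StepSet (P i) (A (i' : ℕ)) (P i')) ∧
        (∀ i : Fin (r - 1), (i : ℕ) = r - 2 → IsColumn (A (r - 1)) (P i))}.ncard =
      (ChainSet ((List.range r).map A) τ).ncard := by
  obtain ⟨n, rfl⟩ : ∃ n, r = n + 2 := ⟨r - 2, by omega⟩
  have hr1 : n + 2 - 1 = n + 1 := by omega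
  have hr2 : n + 2 - 2 = n := by omega
  rw [hr1, hr2]
  apply bijOn_ncard (f := fun P : Fin (n + 1) → YoungDiagram => (List.ofFn P) ++ [⊥])
  have hSlen : ∀ P : Fin (n + 1) → YoungDiagram, ((List.ofFn P) ++ [⊥]).length = n + 2 := by
    intro P; simp
  have hgetD : ∀ (P : Fin (n + 1) → YoungDiagram) (k : ℕ),
      (τ :: ((List.ofFn P) ++ [⊥])).getD k ⊥ =
        if k = 0 then τ else if h : k - 1 < n + 1 then P ⟨k - 1, h⟩ else ⊥ := by
    intro P k
    cases k with
    | zero => simp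
    | succ k => rw [List.getD_cons_succ, getD_ofFn_append]; simp
  constructor
  · rintro P ⟨h1, h2, h3⟩
    rw [mem_chainSet_iff]
    refine ⟨by simp, ?_, ?_⟩
    · intro k hk
      rw [List.length_map, List.length_range] at hk
      rw [getD_range_map A hk, hgetD, getD_ofFn_append]
      cases k with
      | zero => simpa using h1 ⟨0, by omega⟩ rfl
      | succ k =>
        simp only [Nat.succ_ne_zero, if_false, Nat.add_sub_cancel]
        by_cases hk1 : k + 1 < n + 1
        · rw [dif_pos (by omega), dif_pos hk1]
          exact h2 ⟨k, by omega⟩ ⟨k + 1, hk1⟩ rfl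
        · have hkn : k = n := by omega
          rw [dif_pos (by omega), dif_neg (by omega)]
          have hcol := h3 ⟨k, by omega⟩ (by simpa using hkn)
          have hst := isColumn_iff_stepSet_bot.1 hcol
          simpa [hkn] using hst
    · rw [hSlen, hgetD]
      rw [if_neg (by omega), dif_neg (by omega)]
  constructor
  · intro P1 _ P2 _ heq
    simp only at heq
    exact List.ofFn_inj.1 (List.append_cancel_right heq)
  · intro S hS
    obtain ⟨hlenS, hsteps, hend⟩ := mem_chainSet_iff.1 hS
    rw [List.length_map, List.length_range] at hlenS
    have hendS : S.getD (n + 1) ⊥ = ⊥ := by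
      rw [hlenS] at hend
      rwa [List.getD_cons_succ] at hend
    set P : Fin (n + 1) → YoungDiagram := fun i => S.getD (i : ℕ) ⊥ with hP
    have hstep' : ∀ k, k < n + 2 →
        StepSet ((τ :: S).getD k ⊥) (A k) (S.getD k ⊥) := by
      intro k hk
      have := hsteps k (by simpa using hk)
      rwa [getD_range_map A hk] at this
    refine ⟨P, ⟨?_, ?_, ?_⟩, ?_⟩
    · intro i hi
      have := hstep' 0 (by omega)
      simp only [List.getD_cons_zero] at this
      simpa [hP, hi] using this
    · intro i i' hii
      have := hstep' (i' : ℕ) (by omega)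
      rw [show ((i' : ℕ)) = (i : ℕ) + 1 from hii, List.getD_cons_succ] at this
      simpa [hP, hii] using this
    · intro i hi
      have := hstep' (n + 1) (by omega)
      rw [List.getD_cons_succ, hendS] at this
      rw [isColumn_iff_stepSet_bot]
      simpa [hP, hi] using this
    · simp only
      apply List.ext_getElem (by rw [hSlen, hlenS])
      intro k hk1 hk2
      rw [← List.getD_eq_getElem _ ⊥ hk1, ← List.getD_eq_getElem _ ⊥ hk2,
        getD_ofFn_append]
      split
      · rfl
      · next h =>
        have : k = n + 1 := by rw [hSlen] at hk1; omega
        rw [this, hendS]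

def csum (A : ℕ → ℕ) (j : ℕ) : ℕ := ∑ i ∈ Finset.range j, A i

lemma csum_mono (A : ℕ → ℕ) {j k : ℕ} (h : j ≤ k) : csum A j ≤ csum A k :=
  Finset.sum_le_sum_of_subset (Finset.range_subset_range.2 h)

lemma csum_succ (A : ℕ → ℕ) (j : ℕ) : csum A (j + 1) = csum A j + A j :=
  Finset.sum_range_succ A j

lemma mem_block_iff {A : ℕ → ℕ} {j v : ℕ} :
    v ∈ Block A j ↔ csum A j < v ∧ v ≤ csum A (j + 1) := Finset.mem_Ioc

lemma rowLen_mono {μ ν : YoungDiagram} (h : μ ≤ ν) (i : ℕ) : μ.rowLen i ≤ ν.rowLen i := by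
  by_contra hlt
  push_neg at hlt
  have hm : (i, ν.rowLen i) ∈ μ := YoungDiagram.mem_iff_lt_rowLen.2 hlt
  have : (i, ν.rowLen i) ∈ ν := h hm
  rw [YoungDiagram.mem_iff_lt_rowLen] at this
  omega

lemma syt_mono {τ : YoungDiagram} {M : ℕ → ℕ → ℕ} (hM : IsSYT τ M) {i1 j1 i2 j2 : ℕ}
    (h1 : i1 ≤ i2) (h2 : j1 ≤ j2) (hmem : (i2, j2) ∈ τ) : M i1 j1 ≤ M i2 j2 := by
  have hstep1 : M i1 j1 ≤ M i1 j2 := by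
    rcases eq_or_lt_of_le h2 with rfl | hlt
    · exact le_rfl
    · exact le_of_lt (hM.1 i1 j1 j2 hlt (τ.up_left_mem h1 le_rfl hmem))
  refine le_trans hstep1 ?_
  rcases eq_or_lt_of_le h1 with rfl | hlt
  · exact le_rfl
  · exact le_of_lt (hM.2.1 i1 i2 j2 hlt hmem)

lemma syt_pos {τ : YoungDiagram} {M : ℕ → ℕ → ℕ} (hM : IsSYT τ M) {x : ℕ × ℕ}
    (hx : x ∈ τ.cells) : 1 ≤ M x.1 x.2 ∧ M x.1 x.2 ≤ τ.card := by
  have : M x.1 x.2 ∈ τ.cells.image (fun c => M c.1 c.2) := Finset.mem_image_of_mem _ hx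
  rw [hM.2.2.2.1, Finset.mem_Icc] at this
  exact this

noncomputable def shapeLE (τ : YoungDiagram) (M : ℕ → ℕ → ℕ) (m : ℕ) : YoungDiagram :=
  if h : IsLowerSet (↑(τ.cells.filter (fun c => M c.1 c.2 ≤ m)) : Set (ℕ × ℕ)) then
    ⟨τ.cells.filter (fun c => M c.1 c.2 ≤ m), h⟩
  else ⊥

lemma cells_shapeLE {τ : YoungDiagram} {M : ℕ → ℕ → ℕ} (hM : IsSYT τ M) (m : ℕ) :
    (shapeLE τ M m).cells = τ.cells.filter (fun c => M c.1 c.2 ≤ m) := by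
  rw [shapeLE, dif_pos]
  rintro ⟨i2, j2⟩ ⟨i1, j1⟩ ⟨hle1, hle2⟩ hmem
  simp only [Finset.coe_filter, Set.mem_setOf_eq, Finset.mem_coe, YoungDiagram.mem_cells] at *
  obtain ⟨hmem2, hval⟩ := hmem
  refine ⟨τ.up_left_mem hle1 hle2 hmem2, le_trans (syt_mono hM hle1 hle2 hmem2) hval⟩

lemma mem_shapeLE {τ : YoungDiagram} {M : ℕ → ℕ → ℕ} (hM : IsSYT τ M) {m : ℕ} {x : ℕ × ℕ} :
    x ∈ shapeLE τ M m ↔ x ∈ τ ∧ M x.1 x.2 ≤ m := by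
  rw [← YoungDiagram.mem_cells, cells_shapeLE hM, Finset.mem_filter, YoungDiagram.mem_cells]

lemma shapeLE_top {τ : YoungDiagram} {M : ℕ → ℕ → ℕ} (hM : IsSYT τ M) {m : ℕ}
    (hm : τ.card ≤ m) : shapeLE τ M m = τ := by
  ext x
  rw [cells_shapeLE hM, Finset.mem_filter]
  exact ⟨fun h => h.1, fun h => ⟨h, le_trans (syt_pos hM h).2 hm⟩⟩

lemma shapeLE_zero {τ : YoungDiagram} {M : ℕ → ℕ → ℕ} (hM : IsSYT τ M) :
    shapeLE τ M 0 = ⊥ := by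
  ext x
  rw [cells_shapeLE hM, Finset.mem_filter]
  simp only [YoungDiagram.cells_bot, Finset.notMem_empty, iff_false]
  rintro ⟨h1, h2⟩
  have := (syt_pos hM h1).1
  omega

lemma shapeLE_mono {τ : YoungDiagram} {M : ℕ → ℕ → ℕ} (hM : IsSYT τ M) {m1 m2 : ℕ}
    (h : m1 ≤ m2) : shapeLE τ M m1 ≤ shapeLE τ M m2 := by
  rw [← YoungDiagram.cells_subset_iff]
  rw [cells_shapeLE hM, cells_shapeLE hM]
  intro x hx
  rw [Finset.mem_filter] at hx ⊢
  exact ⟨hx.1, le_trans hx.2 h⟩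

lemma card_shapeLE {τ : YoungDiagram} {M : ℕ → ℕ → ℕ} (hM : IsSYT τ M) {m : ℕ}
    (hm : m ≤ τ.card) : (shapeLE τ M m).card = m := by
  have himg : (τ.cells.filter (fun c => M c.1 c.2 ≤ m)).image (fun c => M c.1 c.2)
      = Finset.Icc 1 m := by
    ext v
    simp only [Finset.mem_image, Finset.mem_filter, Finset.mem_Icc]
    constructor
    · rintro ⟨x, ⟨hx, hv⟩, rfl⟩
      exact ⟨(syt_pos hM hx).1, hv⟩
    · rintro ⟨h1, h2⟩
      have : v ∈ τ.cells.image (fun c => M c.1 c.2) := by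
        rw [hM.2.2.2.1, Finset.mem_Icc]
        exact ⟨h1, le_trans h2 hm⟩
      rw [Finset.mem_image] at this
      obtain ⟨x, hx, rfl⟩ := this
      exact ⟨x, ⟨hx, h2⟩, rfl⟩
  have hcard : (τ.cells.filter (fun c => M c.1 c.2 ≤ m)).card = m := by
    rw [← Finset.card_image_of_injOn (hM.2.2.2.2.mono (by
      intro x hx
      simp only [Finset.coe_filter, Set.mem_setOf_eq] at hx
      exact hx.1)), himg, Nat.card_Icc]
    omega
  rw [YoungDiagram.card, cells_shapeLE hM, hcard]

lemma mem_shapeLE' {τ : YoungDiagram} {M : ℕ → ℕ → ℕ} (hM : IsSYT τ M) {m i j : ℕ} :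
    (i, j) ∈ shapeLE τ M m ↔ (i, j) ∈ τ ∧ M i j ≤ m := mem_shapeLE hM

lemma mem_iff_lt_rowLen' {μ : YoungDiagram} {x : ℕ × ℕ} : x ∈ μ ↔ x.2 < μ.rowLen x.1 := by
  obtain ⟨i, j⟩ := x
  exact YoungDiagram.mem_iff_lt_rowLen

lemma rowLen_shapeLE_succ' {r : ℕ} {A : ℕ → ℕ} {τ : YoungDiagram} {M : ℕ → ℕ → ℕ}
    (hM : IsSYT τ M) (hBRC : BlockRowCond r A τ M)
    {b : ℕ} (hb1 : 1 ≤ b) (hbr : b ≤ r) (i : ℕ) :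
    (shapeLE τ M (csum A b)).rowLen i ≤ (shapeLE τ M (csum A (b - 1))).rowLen i + 1 := by
  by_contra hcon
  push_neg at hcon
  have hb' : b - 1 + 1 = b := by omega
  have hx1 : (i, (shapeLE τ M (csum A (b - 1))).rowLen i) ∈ shapeLE τ M (csum A b) :=
    YoungDiagram.mem_iff_lt_rowLen.2 (by omega)
  have hx2 : (i, (shapeLE τ M (csum A (b - 1))).rowLen i + 1) ∈ shapeLE τ M (csum A b) :=
    YoungDiagram.mem_iff_lt_rowLen.2 (by omega)
  have hn1 : (i, (shapeLE τ M (csum A (b - 1))).rowLen i) ∉ shapeLE τ M (csum A (b - 1)) := by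
    rw [YoungDiagram.mem_iff_lt_rowLen]
    omega
  have hn2 : (i, (shapeLE τ M (csum A (b - 1))).rowLen i + 1)
      ∉ shapeLE τ M (csum A (b - 1)) := by
    rw [YoungDiagram.mem_iff_lt_rowLen]
    omega
  rw [mem_shapeLE' hM] at hx1 hx2 hn1 hn2
  simp only [not_and, not_le] at hn1 hn2
  have hv1 := hn1 hx1.1
  have hv2 := hn2 hx2.1
  have hlt := hM.1 i ((shapeLE τ M (csum A (b - 1))).rowLen i)
    ((shapeLE τ M (csum A (b - 1))).rowLen i + 1) (by omega) hx2.1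
  have := hBRC (b - 1) (by omega) _
    (mem_block_iff.2 ⟨hv1, by rw [hb']; exact hx1.2⟩) _
    (mem_block_iff.2 ⟨hv2, by rw [hb']; exact hx2.2⟩) hlt
    (i, (shapeLE τ M (csum A (b - 1))).rowLen i) ((YoungDiagram.mem_cells _).2 hx1.1)
    (i, (shapeLE τ M (csum A (b - 1))).rowLen i + 1) ((YoungDiagram.mem_cells _).2 hx2.1)
    rfl rfl
  omega

lemma syt_value_formula {r ℓ : ℕ} {A : ℕ → ℕ} {τ : YoungDiagram} {M : ℕ → ℕ → ℕ}
    (hM : IsSYT τ M) (hBRC : BlockRowCond r A τ M) (hτℓ : τ.card = ℓ)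
    (hsum : csum A r = ℓ) {x : ℕ × ℕ} (hx : x ∈ τ) {b : ℕ} (hb1 : 1 ≤ b) (hbr : b ≤ r)
    (hv1 : csum A (b - 1) < M x.1 x.2) (hv2 : M x.1 x.2 ≤ csum A b) :
    M x.1 x.2 = csum A (b - 1) + ((Finset.range (x.1 + 1)).filter
      (fun i' => (shapeLE τ M (csum A (b - 1))).rowLen i' <
        (shapeLE τ M (csum A b)).rowLen i')).card := by
  have hb' : b - 1 + 1 = b := by omega
  have hbrc := hBRC (b - 1) (by omega)
  have hwin := rowLen_shapeLE_succ' hM hBRC hb1 hbr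
  set V := τ.cells.filter
    (fun y => csum A (b - 1) < M y.1 y.2 ∧ M y.1 y.2 ≤ M x.1 x.2) with hV
  -- Step 1 : card V = M x - csum (b-1)
  have himg : V.image (fun c => M c.1 c.2) = Finset.Ioc (csum A (b - 1)) (M x.1 x.2) := by
    ext v
    simp only [hV, Finset.mem_image, Finset.mem_filter, Finset.mem_Ioc]
    constructor
    · rintro ⟨y, ⟨hy, h1, h2⟩, rfl⟩
      exact ⟨h1, h2⟩
    · rintro ⟨h1, h2⟩
      have hvIcc : v ∈ τ.cells.image (fun c => M c.1 c.2) := by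
        rw [hM.2.2.2.1, Finset.mem_Icc]
        constructor
        · omega
        · have := (syt_pos hM ((YoungDiagram.mem_cells _).2 hx)).2
          omega
      rw [Finset.mem_image] at hvIcc
      obtain ⟨y, hy, rfl⟩ := hvIcc
      exact ⟨y, ⟨hy, h1, h2⟩, rfl⟩
  have hVcard : V.card = M x.1 x.2 - csum A (b - 1) := by
    rw [← Finset.card_image_of_injOn (hM.2.2.2.2.mono (by
      intro y hy
      simp only [hV, Finset.coe_filter, Set.mem_setOf_eq] at hy
      exact hy.1)), himg, Nat.card_Ioc]
  -- Step 2 : card V = count of changed rows up to x.1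
  have hVcnt : V.card = ((Finset.range (x.1 + 1)).filter
      (fun i' => (shapeLE τ M (csum A (b - 1))).rowLen i' <
        (shapeLE τ M (csum A b)).rowLen i')).card := by
    apply Finset.card_bij (fun (y : ℕ × ℕ) _ => y.1)
    · rintro y hy
      simp only [hV, Finset.mem_filter] at hy
      obtain ⟨hyc, hy1, hy2⟩ := hy
      have hymem : y ∈ τ := (YoungDiagram.mem_cells _).1 hyc
      have hy2' : M y.1 y.2 ≤ csum A b := le_trans hy2 hv2
      rw [Finset.mem_filter, Finset.mem_range]
      constructor
      · -- y.1 ≤ x.1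
        rcases eq_or_lt_of_le hy2 with heq | hlt
        · have heqxy : y = x := hM.2.2.2.2 (by simpa using hyc)
            (by simpa using ((YoungDiagram.mem_cells _).2 hx : x ∈ τ.cells)) heq
          subst heqxy
          omega
        · have := hbrc (M y.1 y.2) (mem_block_iff.2 ⟨hy1, by rwa [hb']⟩)
            (M x.1 x.2) (mem_block_iff.2 ⟨hv1, by rwa [hb']⟩) hlt
            y hyc x ((YoungDiagram.mem_cells _).2 hx) rfl rfl
          omega
      · -- row changed
        have hbig : y ∈ shapeLE τ M (csum A b) :=
          (mem_shapeLE hM).2 ⟨hymem, hy2'⟩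
        have hsmall : y ∉ shapeLE τ M (csum A (b - 1)) := by
          rw [mem_shapeLE hM]
          rintro ⟨-, hle⟩
          omega
        rw [mem_iff_lt_rowLen'] at hbig
        rw [mem_iff_lt_rowLen'] at hsmall
        omega
    · rintro y1 hy1 y2 hy2 heq
      simp only [hV, Finset.mem_filter] at hy1 hy2
      obtain ⟨hc1, ha1, hb1'⟩ := hy1
      obtain ⟨hc2, ha2, hb2'⟩ := hy2
      have hm1 : y1 ∈ τ := (YoungDiagram.mem_cells _).1 hc1
      have hm2 : y2 ∈ τ := (YoungDiagram.mem_cells _).1 hc2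
      -- both in window on row y1.1
      have hwin' := hwin y1.1
      have hb1g : y1 ∈ shapeLE τ M (csum A b) :=
        (mem_shapeLE hM).2 ⟨hm1, le_trans hb1' hv2⟩
      have hb2g : y2 ∈ shapeLE τ M (csum A b) :=
        (mem_shapeLE hM).2 ⟨hm2, le_trans hb2' hv2⟩
      have hs1 : y1 ∉ shapeLE τ M (csum A (b - 1)) := by
        rw [mem_shapeLE hM]; rintro ⟨-, h⟩; omega
      have hs2 : y2 ∉ shapeLE τ M (csum A (b - 1)) := by
        rw [mem_shapeLE hM]; rintro ⟨-, h⟩; omega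
      rw [mem_iff_lt_rowLen'] at hb1g hb2g
      rw [mem_iff_lt_rowLen'] at hs1 hs2
      rw [← heq] at hb2g hs2
      have : y1.2 = y2.2 := by omega
      exact Prod.ext heq this
    · rintro i' hi'
      rw [Finset.mem_filter, Finset.mem_range] at hi'
      obtain ⟨hile, hch⟩ := hi'
      have hbig : (i', (shapeLE τ M (csum A (b - 1))).rowLen i') ∈ shapeLE τ M (csum A b) :=
        YoungDiagram.mem_iff_lt_rowLen.2 hch
      have hyτ : (i', (shapeLE τ M (csum A (b - 1))).rowLen i') ∈ τ ∧
          M i' ((shapeLE τ M (csum A (b - 1))).rowLen i') ≤ csum A b :=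
        (mem_shapeLE' hM).1 hbig
      have hsmall : (i', (shapeLE τ M (csum A (b - 1))).rowLen i')
          ∉ shapeLE τ M (csum A (b - 1)) := by
        rw [YoungDiagram.mem_iff_lt_rowLen]
        omega
      have hylow : csum A (b - 1) < M i' ((shapeLE τ M (csum A (b - 1))).rowLen i') := by
        rw [mem_shapeLE' hM] at hsmall
        push_neg at hsmall
        exact hsmall hyτ.1
      have hyle : M i' ((shapeLE τ M (csum A (b - 1))).rowLen i') ≤ M x.1 x.2 := by
        by_contra hgt
        push_neg at hgt
        have := hbrc (M x.1 x.2) (mem_block_iff.2 ⟨hv1, by rwa [hb']⟩)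
          (M i' ((shapeLE τ M (csum A (b - 1))).rowLen i'))
          (mem_block_iff.2 ⟨hylow, by rw [hb']; exact hyτ.2⟩) hgt
          x ((YoungDiagram.mem_cells _).2 hx)
          (i', (shapeLE τ M (csum A (b - 1))).rowLen i')
          ((YoungDiagram.mem_cells _).2 hyτ.1) rfl rfl
        omega
      refine ⟨(i', (shapeLE τ M (csum A (b - 1))).rowLen i'), ?_, rfl⟩
      simp only [hV, Finset.mem_filter]
      exact ⟨(YoungDiagram.mem_cells _).2 hyτ.1, hylow, hyle⟩
  omega

section BM

variable {r : ℕ} {A : ℕ → ℕ} {T : ℕ → YoungDiagram}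

lemma T_mono (hstep : ∀ j < r, StepSet (T (j+1)) (A j) (T j)) {j k : ℕ}
    (hjk : j ≤ k) (hk : k ≤ r) : T j ≤ T k := by
  induction k, hjk using Nat.le_induction with
  | base => exact le_rfl
  | succ k hk' ih => exact le_trans (ih (by omega)) (stepSet_le (hstep k (by omega)))

lemma T_card (hT0 : T 0 = ⊥) (hstep : ∀ j < r, StepSet (T (j+1)) (A j) (T j)) {j : ℕ}
    (hj : j ≤ r) : (T j).card = csum A j := by
  induction j with
  | zero => rw [hT0, bot_card, csum]; simp
  | succ j ih =>
    have h1 := (hstep j (by omega)).1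
    rw [csum_succ, ← ih (by omega)]
    omega

noncomputable def bIdx (r : ℕ) (T : ℕ → YoungDiagram) (i j : ℕ) : ℕ :=
  Nat.find (show ∃ n, (i, j) ∈ T n ∨ r ≤ n from ⟨r, Or.inr le_rfl⟩)

noncomputable def bM (r : ℕ) (A : ℕ → ℕ) (T : ℕ → YoungDiagram) (i j : ℕ) : ℕ :=
  if (i, j) ∈ T r then
    csum A (bIdx r T i j - 1) + ((Finset.range (i + 1)).filter
      (fun i' => (T (bIdx r T i j - 1)).rowLen i' < (T (bIdx r T i j)).rowLen i')).card
  else 0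

lemma bIdx_le (i j : ℕ) : bIdx r T i j ≤ r :=
  Nat.find_min' _ (Or.inr le_rfl)

lemma bIdx_mem {i j : ℕ} (h : (i, j) ∈ T r) : (i, j) ∈ T (bIdx r T i j) := by
  have hspec := Nat.find_spec (show ∃ n, (i, j) ∈ T n ∨ r ≤ n from ⟨r, Or.inr le_rfl⟩)
  rcases hspec with h1 | h1
  · exact h1
  · have := bIdx_le (r := r) (T := T) i j
    have heq : bIdx r T i j = r := le_antisymm this h1
    rwa [heq]

lemma bIdx_not_mem {i j n : ℕ} (hn : n < bIdx r T i j) : (i, j) ∉ T n := by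
  have := Nat.find_min (show ∃ n, (i, j) ∈ T n ∨ r ≤ n from ⟨r, Or.inr le_rfl⟩) hn
  push_neg at this
  exact this.1

lemma bIdx_pos (hr : 1 ≤ r) (hT0 : T 0 = ⊥) (i j : ℕ) : 1 ≤ bIdx r T i j := by
  by_contra h0
  push_neg at h0
  interval_cases h : bIdx r T i j
  · have hspec := Nat.find_spec (show ∃ n, (i, j) ∈ T n ∨ r ≤ n from ⟨r, Or.inr le_rfl⟩)
    rw [show Nat.find _ = bIdx r T i j from rfl, h] at hspec
    rcases hspec with h1 | h1
    · rw [hT0] at h1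
      exact YoungDiagram.notMem_bot _ h1
    · omega

lemma bIdx_le_of_mem {i j n : ℕ} (h : (i, j) ∈ T n) : bIdx r T i j ≤ n :=
  Nat.find_min' _ (Or.inl h)

lemma bIdx_mono (hstep : ∀ j < r, StepSet (T (j+1)) (A j) (T j))
    {i1 j1 i2 j2 : ℕ} (h1 : i1 ≤ i2) (h2 : j1 ≤ j2) (hmem : (i2, j2) ∈ T r) :
    bIdx r T i1 j1 ≤ bIdx r T i2 j2 :=
  bIdx_le_of_mem ((T (bIdx r T i2 j2)).up_left_mem h1 h2 (bIdx_mem hmem))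

-- the window facts for the strip containing a cell
lemma strip_window (hr : 1 ≤ r) (hT0 : T 0 = ⊥)
    (hstep : ∀ j < r, StepSet (T (j+1)) (A j) (T j)) {i j : ℕ} (h : (i, j) ∈ T r) :
    (T (bIdx r T i j - 1)).rowLen i ≤ j ∧ j < (T (bIdx r T i j)).rowLen i ∧
      (T (bIdx r T i j)).rowLen i ≤ (T (bIdx r T i j - 1)).rowLen i + 1 := by
  have hb1 := bIdx_pos hr hT0 (T := T) i j
  have hb2 := bIdx_le (r := r) (T := T) i j
  have hmem := bIdx_mem h
  have hnot := bIdx_not_mem (r := r) (T := T) (i := i) (j := j)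
    (n := bIdx r T i j - 1) (by omega)
  rw [YoungDiagram.mem_iff_lt_rowLen] at hmem
  rw [YoungDiagram.mem_iff_lt_rowLen] at hnot
  push_neg at hnot
  have hwin := (hstep (bIdx r T i j - 1) (by omega)).2 i
  rw [show bIdx r T i j - 1 + 1 = bIdx r T i j by omega] at hwin
  exact ⟨hnot, hmem, hwin.2⟩

lemma card_changed (hT0 : T 0 = ⊥) (hstep : ∀ j < r, StepSet (T (j+1)) (A j) (T j))
    {j : ℕ} (hj : j < r) {N : ℕ} (hN : (T r).colLen 0 ≤ N) :
    ((Finset.range N).filter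
      (fun i' => (T j).rowLen i' < (T (j+1)).rowLen i')).card = A j := by
  have hsub : ∀ k, k ≤ r → (T k).colLen 0 ≤ N := by
    intro k hk
    refine le_trans (colLen_le_of_bnds_left (τ := T r) ?_) hN
    exact fun i => rowLen_mono (T_mono hstep hk le_rfl) i
  have hsum1 : (T (j+1)).card = ∑ i ∈ Finset.range N, (T (j+1)).rowLen i :=
    card_eq_sum_rowLen _ (hsub _ (by omega))
  have hsum0 : (T j).card = ∑ i ∈ Finset.range N, (T j).rowLen i :=
    card_eq_sum_rowLen _ (hsub _ (by omega))
  have hpt : ∀ i ∈ Finset.range N, (T (j+1)).rowLen i =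
      (T j).rowLen i + (if (T j).rowLen i < (T (j+1)).rowLen i then 1 else 0) := by
    intro i _
    have := (hstep j hj).2 i
    split <;> omega
  have hsplit : ∑ i ∈ Finset.range N, (T (j+1)).rowLen i =
      (∑ i ∈ Finset.range N, (T j).rowLen i) +
      ((Finset.range N).filter (fun i' => (T j).rowLen i' < (T (j+1)).rowLen i')).card := by
    rw [Finset.sum_congr rfl hpt, Finset.sum_add_distrib, Finset.card_filter]
  have hc := (hstep j hj).1
  omega

lemma cnt_le (hr : 1 ≤ r) (hT0 : T 0 = ⊥)
    (hstep : ∀ j < r, StepSet (T (j+1)) (A j) (T j)) {j : ℕ} (hj : j < r) (n : ℕ) :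
    ((Finset.range n).filter
      (fun i' => (T j).rowLen i' < (T (j+1)).rowLen i')).card ≤ A j := by
  set N := max n ((T r).colLen 0) with hN
  rw [← card_changed hT0 hstep hj (N := N) (by omega)]
  apply Finset.card_le_card
  intro i' hi'
  rw [Finset.mem_filter, Finset.mem_range] at hi' ⊢
  exact ⟨by omega, hi'.2⟩

-- value range of bM
lemma bM_range (hr : 1 ≤ r) (hT0 : T 0 = ⊥)
    (hstep : ∀ j < r, StepSet (T (j+1)) (A j) (T j)) {i j : ℕ} (h : (i, j) ∈ T r) :
    csum A (bIdx r T i j - 1) < bM r A T i j ∧ bM r A T i j ≤ csum A (bIdx r T i j) := by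
  have hb1 := bIdx_pos hr hT0 (T := T) i j
  have hb2 := bIdx_le (r := r) (T := T) i j
  have hwin := strip_window hr hT0 hstep h
  rw [bM, if_pos h]
  constructor
  · have : i ∈ (Finset.range (i + 1)).filter
        (fun i' => (T (bIdx r T i j - 1)).rowLen i' < (T (bIdx r T i j)).rowLen i') := by
      rw [Finset.mem_filter, Finset.mem_range]
      exact ⟨by omega, by omega⟩
    have := Finset.card_pos.2 ⟨i, this⟩
    omega
  · have hle := cnt_le hr hT0 hstep (j := bIdx r T i j - 1) (by omega) (i + 1)
    rw [show bIdx r T i j - 1 + 1 = bIdx r T i j by omega] at hle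
    have : csum A (bIdx r T i j) = csum A (bIdx r T i j - 1) + A (bIdx r T i j - 1) := by
      rw [← csum_succ, show bIdx r T i j - 1 + 1 = bIdx r T i j by omega]
    omega

-- strictly increasing counts along rows of the same strip
lemma bM_row_lt (hr : 1 ≤ r) (hT0 : T 0 = ⊥)
    (hstep : ∀ j < r, StepSet (T (j+1)) (A j) (T j)) {i1 j1 i2 j2 : ℕ}
    (hm1 : (i1, j1) ∈ T r) (hm2 : (i2, j2) ∈ T r)
    (hbeq : bIdx r T i1 j1 = bIdx r T i2 j2) (hlt : i1 < i2) :
    bM r A T i1 j1 < bM r A T i2 j2 := by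
  have hwin2 := strip_window hr hT0 hstep hm2
  rw [bM, if_pos hm1, bM, if_pos hm2, hbeq]
  have hsub : (Finset.range (i1 + 1)).filter
      (fun i' => (T (bIdx r T i2 j2 - 1)).rowLen i' < (T (bIdx r T i2 j2)).rowLen i') ⊂
      (Finset.range (i2 + 1)).filter
      (fun i' => (T (bIdx r T i2 j2 - 1)).rowLen i' < (T (bIdx r T i2 j2)).rowLen i') := by
    constructor
    · intro a ha
      rw [Finset.mem_filter, Finset.mem_range] at ha ⊢
      exact ⟨by omega, ha.2⟩
    · intro hcon
      have : i2 ∈ (Finset.range (i2 + 1)).filter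
          (fun i' => (T (bIdx r T i2 j2 - 1)).rowLen i' < (T (bIdx r T i2 j2)).rowLen i') := by
        rw [Finset.mem_filter, Finset.mem_range]
        exact ⟨by omega, by omega⟩
      have := hcon this
      rw [Finset.mem_filter, Finset.mem_range] at this
      omega
  have := Finset.card_lt_card hsub
  omega

-- two cells of the same strip in the same row are equal
lemma bM_same_row (hr : 1 ≤ r) (hT0 : T 0 = ⊥)
    (hstep : ∀ j < r, StepSet (T (j+1)) (A j) (T j)) {i j1 j2 : ℕ}
    (hm1 : (i, j1) ∈ T r) (hm2 : (i, j2) ∈ T r)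
    (hbeq : bIdx r T i j1 = bIdx r T i j2) : j1 = j2 := by
  have hw1 := strip_window hr hT0 hstep hm1
  have hw2 := strip_window hr hT0 hstep hm2
  rw [hbeq] at hw1
  omega


end BM

section BM2
variable {r : ℕ} {A : ℕ → ℕ} {T : ℕ → YoungDiagram}

lemma bM_lt (hr : 1 ≤ r) (hT0 : T 0 = ⊥)
    (hstep : ∀ j < r, StepSet (T (j+1)) (A j) (T j)) {i1 j1 i2 j2 : ℕ}
    (h1 : (i1, j1) ∈ T r) (h2 : (i2, j2) ∈ T r)
    (hb : bIdx r T i1 j1 < bIdx r T i2 j2) : bM r A T i1 j1 < bM r A T i2 j2 := by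
  have r1 := bM_range hr hT0 hstep h1
  have r2 := bM_range hr hT0 hstep h2
  have hc := csum_mono A (show bIdx r T i1 j1 ≤ bIdx r T i2 j2 - 1 by omega)
  omega

lemma bM_syt (hr : 1 ≤ r) (hT0 : T 0 = ⊥)
    (hstep : ∀ j < r, StepSet (T (j+1)) (A j) (T j)) : IsSYT (T r) (bM r A T) := by
  have hinj : Set.InjOn (fun c : ℕ × ℕ => bM r A T c.1 c.2) ↑(T r).cells := by
    rintro ⟨i1, j1⟩ h1 ⟨i2, j2⟩ h2 heq
    simp only [Finset.mem_coe, YoungDiagram.mem_cells] at h1 h2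
    simp only at heq
    rcases lt_trichotomy (bIdx r T i1 j1) (bIdx r T i2 j2) with hb | hb | hb
    · exact absurd heq (Nat.ne_of_lt (bM_lt hr hT0 hstep h1 h2 hb))
    · rcases lt_trichotomy i1 i2 with hi | hi | hi
      · exact absurd heq (Nat.ne_of_lt (bM_row_lt hr hT0 hstep h1 h2 hb hi))
      · subst hi
        rw [bM_same_row hr hT0 hstep h1 h2 hb]
      · exact absurd heq.symm (Nat.ne_of_lt (bM_row_lt hr hT0 hstep h2 h1 hb.symm hi))
    · exact absurd heq.symm (Nat.ne_of_lt (bM_lt hr hT0 hstep h2 h1 hb))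
  refine ⟨?_, ?_, ?_, ?_, hinj⟩
  · intro i j1 j2 hlt hmem
    have hm1 : (i, j1) ∈ T r := (T r).up_left_mem le_rfl (by omega) hmem
    have hble := bIdx_mono hstep le_rfl (le_of_lt hlt) hmem
    rcases eq_or_lt_of_le hble with heq | hltb
    · exact absurd (bM_same_row hr hT0 hstep hm1 hmem heq) (by omega)
    · exact bM_lt hr hT0 hstep hm1 hmem hltb
  · intro i1 i2 j hlt hmem
    have hm1 : (i1, j) ∈ T r := (T r).up_left_mem (by omega) le_rfl hmem
    have hble := bIdx_mono hstep (le_of_lt hlt) le_rfl hmem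
    rcases eq_or_lt_of_le hble with heq | hltb
    · exact bM_row_lt hr hT0 hstep hm1 hmem heq hlt
    · exact bM_lt hr hT0 hstep hm1 hmem hltb
  · intro i j hmem
    rw [bM, if_neg hmem]
  · have hsub : (T r).cells.image (fun c => bM r A T c.1 c.2) ⊆
        Finset.Icc 1 (T r).card := by
      intro v hv
      rw [Finset.mem_image] at hv
      obtain ⟨⟨i, j⟩, hx, rfl⟩ := hv
      rw [YoungDiagram.mem_cells] at hx
      have hr1 := bM_range hr hT0 hstep hx
      have hr2 : csum A (bIdx r T i j) ≤ csum A r := csum_mono A (bIdx_le i j)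
      rw [Finset.mem_Icc]
      rw [T_card hT0 hstep le_rfl]
      simp only
      omega
    apply Finset.eq_of_subset_of_card_le hsub
    rw [Finset.card_image_of_injOn hinj, Nat.card_Icc]
    have hcc : (T r).card = (T r).cells.card := rfl
    omega

lemma bM_brc (hr : 1 ≤ r) (hT0 : T 0 = ⊥)
    (hstep : ∀ j < r, StepSet (T (j+1)) (A j) (T j)) :
    BlockRowCond r A (T r) (bM r A T) := by
  intro j hj m1 hm1 m2 hm2 hlt c1 hc1 c2 hc2 he1 he2
  obtain ⟨i1, j1⟩ := c1
  obtain ⟨i2, j2⟩ := c2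
  rw [YoungDiagram.mem_cells] at hc1 hc2
  rw [mem_block_iff] at hm1 hm2
  simp only at he1 he2 ⊢
  have hr1 := bM_range hr hT0 hstep hc1
  have hr2 := bM_range hr hT0 hstep hc2
  rw [he1] at hr1
  rw [he2] at hr2
  have hble1 := bIdx_le (r := r) (T := T) i1 j1
  have hble2 := bIdx_le (r := r) (T := T) i2 j2
  have hbp1 := bIdx_pos hr hT0 (T := T) i1 j1
  have hbp2 := bIdx_pos hr hT0 (T := T) i2 j2
  have hb1 : bIdx r T i1 j1 = j + 1 := by
    by_contra hne
    rcases lt_or_gt_of_ne hne with hlt' | hgt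
    · have : csum A (bIdx r T i1 j1) ≤ csum A j := csum_mono A (by omega)
      omega
    · have : csum A (j + 1) ≤ csum A (bIdx r T i1 j1 - 1) := csum_mono A (by omega)
      omega
  have hb2 : bIdx r T i2 j2 = j + 1 := by
    by_contra hne
    rcases lt_or_gt_of_ne hne with hlt' | hgt
    · have : csum A (bIdx r T i2 j2) ≤ csum A j := csum_mono A (by omega)
      omega
    · have : csum A (j + 1) ≤ csum A (bIdx r T i2 j2 - 1) := csum_mono A (by omega)
      omega
  rcases lt_trichotomy i1 i2 with hi | hi | hi
  · exact hi
  · exfalso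
    subst hi
    have := bM_same_row hr hT0 hstep hc1 hc2 (by omega)
    subst this
    omega
  · exfalso
    have := bM_row_lt hr hT0 hstep hc2 hc1 (by omega) hi
    omega

end BM2

lemma syt_value_formula' {r ℓ : ℕ} {A : ℕ → ℕ} {τ : YoungDiagram} {M : ℕ → ℕ → ℕ}
    (hM : IsSYT τ M) (hBRC : BlockRowCond r A τ M) (hτℓ : τ.card = ℓ)
    (hsum : csum A r = ℓ) {i j : ℕ} (hx : (i, j) ∈ τ) {b : ℕ} (hb1 : 1 ≤ b) (hbr : b ≤ r)
    (hv1 : csum A (b - 1) < M i j) (hv2 : M i j ≤ csum A b) :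
    M i j = csum A (b - 1) + ((Finset.range (i + 1)).filter
      (fun i' => (shapeLE τ M (csum A (b - 1))).rowLen i' <
        (shapeLE τ M (csum A b)).rowLen i')).card :=
  syt_value_formula hM hBRC hτℓ hsum hx hb1 hbr hv1 hv2

lemma getD_cons_of_pos {α : Type*} (a : α) (l : List α) (d : α) {k : ℕ} (h : 0 < k) :
    (a :: l).getD k d = l.getD (k - 1) d := by
  obtain ⟨k', rfl⟩ : ∃ k', k = k' + 1 := ⟨k - 1, by omega⟩
  simp

section BMi2
variable {r : ℕ} {A : ℕ → ℕ} {T : ℕ → YoungDiagram}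

lemma bM_shapes (hr : 1 ≤ r) (hT0 : T 0 = ⊥)
    (hstep : ∀ j < r, StepSet (T (j+1)) (A j) (T j)) {j : ℕ} (hj : j ≤ r) :
    shapeLE (T r) (bM r A T) (csum A j) = T j := by
  have hN := bM_syt hr hT0 hstep
  ext x
  obtain ⟨i, jj⟩ := x
  rw [cells_shapeLE hN, Finset.mem_filter]
  simp only [YoungDiagram.mem_cells]
  constructor
  · rintro ⟨hmem, hle⟩
    by_cases hb : bIdx r T i jj ≤ j
    · exact T_mono hstep hb hj (bIdx_mem hmem)
    · exfalso
      push_neg at hb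
      have hr1 := (bM_range hr hT0 hstep hmem).1
      have hcm : csum A j ≤ csum A (bIdx r T i jj - 1) := csum_mono A (by omega)
      omega
  · intro hmem
    have hmemr : (i, jj) ∈ T r := T_mono hstep hj le_rfl hmem
    refine ⟨hmemr, ?_⟩
    have hble : bIdx r T i jj ≤ j := bIdx_le_of_mem hmem
    have hr2 := (bM_range hr hT0 hstep hmemr).2
    have := csum_mono A hble
    omega
end BMi2

lemma stepSet_shapeLE {r ℓ : ℕ} {A : ℕ → ℕ} {τ : YoungDiagram} {M : ℕ → ℕ → ℕ}
    (hM : IsSYT τ M) (hBRC : BlockRowCond r A τ M) (hτℓ : τ.card = ℓ)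
    (hsum : csum A r = ℓ) {j : ℕ} (hj : j < r) :
    StepSet (shapeLE τ M (csum A (j + 1))) (A j) (shapeLE τ M (csum A j)) := by
  have h1 : csum A (j + 1) ≤ τ.card := by
    rw [hτℓ, ← hsum]; exact csum_mono A (by omega)
  have h0 : csum A j ≤ τ.card := le_trans (csum_mono A (by omega)) h1
  refine ⟨?_, ?_⟩
  · rw [card_shapeLE hM h0, card_shapeLE hM h1, csum_succ]
  · intro i
    constructor
    · exact rowLen_mono (shapeLE_mono hM (csum_mono A (by omega))) i
    · have := rowLen_shapeLE_succ' hM hBRC (b := j + 1) (by omega) (by omega) i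
      simpa using this

lemma block_exists {r ℓ : ℕ} {A : ℕ → ℕ} (hsum : csum A r = ℓ) {v : ℕ}
    (h1 : 1 ≤ v) (h2 : v ≤ ℓ) :
    ∃ b, 1 ≤ b ∧ b ≤ r ∧ csum A (b - 1) < v ∧ v ≤ csum A b := by
  have hex : ∃ j, v ≤ csum A j := ⟨r, by omega⟩
  refine ⟨Nat.find hex, ?_, Nat.find_min' hex (by omega), ?_, Nat.find_spec hex⟩
  · by_contra h0
    push_neg at h0
    have hb0 : Nat.find hex = 0 := by omega
    have := Nat.find_spec hex
    rw [hb0] at this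
    have : csum A 0 = 0 := by rw [csum]; simp
    omega
  · rcases Nat.eq_zero_or_pos (Nat.find hex) with h0 | h0
    · have := Nat.find_spec hex
      rw [h0] at this
      have hc0 : csum A 0 = 0 := by rw [csum]; simp
      omega
    · by_contra hcon
      push_neg at hcon
      exact absurd hcon (Nat.find_min hex (by omega))

lemma getD_map_range {α : Type*} (g : ℕ → α) (d : α) {r k : ℕ} (h : k < r) :
    ((List.range r).map g).getD k d = g k := by
  rw [List.getD_eq_getElem _ _ (by simp [h])]
  simp

lemma rhs_eq_chain (ℓ r : ℕ) (A : ℕ → ℕ) (hr : 1 ≤ r)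
    (hAsum : csum A r = ℓ) (τ : YoungDiagram) (hτ : τ.card = ℓ) :
    {M : ℕ → ℕ → ℕ | IsSYT τ M ∧ BlockRowCond r A τ M}.ncard =
      (ChainSet ((List.range r).map (fun k => A (r - 1 - k))) τ).ncard := by
  apply bijOn_ncard
    (f := fun M => (List.range r).map (fun k => shapeLE τ M (csum A (r - 1 - k))))
  constructor
  · rintro M ⟨hM, hBRC⟩
    rw [mem_chainSet_iff]
    refine ⟨by simp, ?_, ?_⟩
    · intro k hk
      simp only [List.length_map, List.length_range] at hk
      rw [getD_map_range _ 0 hk, getD_map_range _ ⊥ hk]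
      have hgoal : ∀ m, m = csum A (r - k) →
          StepSet ((τ :: (List.range r).map fun k => shapeLE τ M (csum A (r - 1 - k))).getD k ⊥)
            (A (r - 1 - k)) (shapeLE τ M (csum A (r - 1 - k))) := by
        intro m hm
        cases k with
        | zero =>
          simp only [List.getD_cons_zero]
          have h2 := stepSet_shapeLE hM hBRC hτ hAsum (j := r - 1) (by omega)
          rw [show r - 1 + 1 = r by omega, shapeLE_top hM (by omega)] at h2
          simpa using h2
        | succ k' =>
          rw [List.getD_cons_succ, getD_map_range _ ⊥ (by omega)]
          have := stepSet_shapeLE hM hBRC hτ hAsum (j := r - 1 - (k' + 1)) (by omega)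
          rw [show r - 1 - (k' + 1) + 1 = r - 1 - k' by omega] at this
          exact this
      exact hgoal _ rfl
    · simp only [List.length_map, List.length_range]
      rw [getD_cons_of_pos _ _ _ (by omega), getD_map_range _ ⊥ (by omega)]
      rw [show r - 1 - (r - 1) = 0 by omega, show csum A 0 = 0 by rw [csum]; simp]
      exact shapeLE_zero hM
  constructor
  · rintro M1 ⟨hM1, hBRC1⟩ M2 ⟨hM2, hBRC2⟩ heq
    simp only at heq
    have hshape : ∀ j ≤ r, shapeLE τ M1 (csum A j) = shapeLE τ M2 (csum A j) := by
      intro j hj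
      rcases eq_or_lt_of_le hj with rfl | hjr
      · rw [shapeLE_top hM1 (by omega), shapeLE_top hM2 (by omega)]
      · have hk : r - 1 - j < r := by omega
        have h1 := congrArg (fun l => l.getD (r - 1 - j) ⊥) heq
        simp only [getD_map_range _ ⊥ hk] at h1
        rwa [show r - 1 - (r - 1 - j) = j by omega] at h1
    funext i jj
    by_cases hmem : (i, jj) ∈ τ
    · have hp1 : 1 ≤ M1 i jj ∧ M1 i jj ≤ τ.card :=
        syt_pos hM1 ((YoungDiagram.mem_cells _).2 hmem)
      obtain ⟨b, hb1, hbr, hv1, hv2⟩ := block_exists hAsum hp1.1 (hτ ▸ hp1.2)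
      have hv1' : csum A (b - 1) < M2 i jj := by
        have hx : (i, jj) ∉ shapeLE τ M1 (csum A (b - 1)) := by
          rw [mem_shapeLE' hM1]
          rintro ⟨-, h⟩
          omega
        rw [hshape (b - 1) (by omega), mem_shapeLE' hM2] at hx
        push_neg at hx
        exact hx hmem
      have hv2' : M2 i jj ≤ csum A b := by
        have hx : (i, jj) ∈ shapeLE τ M1 (csum A b) :=
          (mem_shapeLE' hM1).2 ⟨hmem, hv2⟩
        rw [hshape b hbr, mem_shapeLE' hM2] at hx
        exact hx.2
      have hf1 := syt_value_formula' hM1 hBRC1 hτ hAsum hmem hb1 hbr hv1 hv2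
      have hf2 := syt_value_formula' hM2 hBRC2 hτ hAsum hmem hb1 hbr hv1' hv2'
      rw [hf1, hf2, hshape (b - 1) (by omega), hshape b hbr]
    · rw [hM1.2.2.1 i jj hmem, hM2.2.2.1 i jj hmem]
  · rintro S hS
    obtain ⟨hlen, hsteps, hend⟩ := mem_chainSet_iff.1 hS
    simp only [List.length_map, List.length_range] at hlen
    set T : ℕ → YoungDiagram := fun j => if j = r then τ else S.getD (r - 1 - j) ⊥ with hT
    have hTr : T r = τ := by rw [hT]; simp
    have hT0 : T 0 = ⊥ := by
      rw [hT]
      simp only [if_neg (by omega : ¬(0 = r))]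
      rw [Nat.sub_zero]
      have hthis := hend
      rw [hlen, getD_cons_of_pos _ _ _ (by omega)] at hthis
      exact hthis
    have hstep : ∀ j < r, StepSet (T (j + 1)) (A j) (T j) := by
      intro j hj
      have hk : r - 1 - j < r := by omega
      have := hsteps (r - 1 - j) (by simpa using hk)
      rw [getD_map_range _ 0 hk, show r - 1 - (r - 1 - j) = j by omega] at this
      have hTj : T j = S.getD (r - 1 - j) ⊥ := by
        rw [hT]; simp only [if_neg (by omega : ¬(j = r))]
      rw [hTj]
      rcases Nat.eq_zero_or_pos (r - 1 - j) with h0 | h0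
      · -- j = r - 1 : predecessor is τ
        rw [h0] at this ⊢
        simp only [List.getD_cons_zero] at this
        have : StepSet τ (A j) (S.getD 0 ⊥) := this
        have hj1 : T (j + 1) = τ := by
          rw [hT]; simp only [if_pos (show j + 1 = r by omega)]
        rwa [hj1]
      · rw [getD_cons_of_pos _ _ _ (by omega)] at this
        have hj1 : T (j + 1) = S.getD (r - 1 - j - 1) ⊥ := by
          rw [hT]
          simp only [if_neg (show ¬(j + 1 = r) by omega)]
          rw [show r - 1 - (j + 1) = r - 1 - j - 1 by omega]
        rw [hj1]
        exact this
    have hsytT : IsSYT (T r) (bM r A T) := bM_syt hr hT0 hstep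
    have hbrcT : BlockRowCond r A (T r) (bM r A T) := bM_brc hr hT0 hstep
    have hsyt : IsSYT τ (bM r A T) := by rwa [hTr] at hsytT
    have hbrc : BlockRowCond r A τ (bM r A T) := by rwa [hTr] at hbrcT
    refine ⟨bM r A T, ⟨hsyt, hbrc⟩, ?_⟩
    simp only
    apply List.ext_getElem (by simp [hlen])
    intro k hk1 hk2
    have hkr : k < r := by simpa using hk1
    have hge : ((List.range r).map fun k => shapeLE τ (bM r A T) (csum A (r - 1 - k)))[k] =
        shapeLE τ (bM r A T) (csum A (r - 1 - k)) := by
      simp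
    rw [hge]
    have hsh : shapeLE (T r) (bM r A T) (csum A (r - 1 - k)) = T (r - 1 - k) :=
      bM_shapes hr hT0 hstep (by omega)
    rw [hTr] at hsh
    rw [hsh, hT]
    simp only [if_neg (show ¬(r - 1 - k = r) by omega)]
    rw [show r - 1 - (r - 1 - k) = k by omega]
    exact List.getD_eq_getElem S ⊥ hk2

lemma perm_rev (r : ℕ) (A : ℕ → ℕ) :
    ((List.range r).map A).Perm ((List.range r).map (fun k => A (r - 1 - k))) := by
  have h : (List.range r).map (fun k => A (r - 1 - k)) = ((List.range r).map A).reverse := by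
    apply List.ext_getElem (by simp)
    intro k h1 h2
    rw [List.getElem_reverse]
    simp
  rw [h]
  exact (List.reverse_perm _).symm

end Aux

/-- For any partition `τ` of `ℓ`, the number of sequences
`(P₁, …, P_{r-1})` with `P₁ ∈ S^τ_{a₁}`, `Pᵢ ∈ S^{P_{i-1}}_{aᵢ}` and
`P_{r-1} = (1,…,1) ⊢ a_r` equals the number of standard Young tableaux `M` of shape `τ`
in which the entries of each block `U_j` occur in strictly increasing rows.
(Sequences are 0-indexed: `P i` for `i : Fin (r-1)` is the paper's `P_{i+1}`.) -/
theorem card_seq_eq_card_SYT (ℓ r : ℕ) (A : ℕ → ℕ) (hr : 2 ≤ r)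
    (hAanti : ∀ i j, i ≤ j → j < r → A j ≤ A i)
    (hApos : ∀ i, i < r → 1 ≤ A i)
    (hAsum : ∑ i ∈ Finset.range r, A i = ℓ)
    (τ : YoungDiagram) (hτ : τ.card = ℓ) :
    {P : Fin (r - 1) → YoungDiagram |
        (∀ i : Fin (r - 1), (i : ℕ) = 0 → StepSet τ (A 0) (P i)) ∧
        (∀ i i' : Fin (r - 1), (i' : ℕ) = (i : ℕ) + 1 →
          StepSet (P i) (A (i' : ℕ)) (P i')) ∧
        (∀ i : Fin (r - 1), (i : ℕ) = r - 2 → IsColumn (A (r - 1)) (P i))}.ncard =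
      {M : ℕ → ℕ → ℕ | IsSYT τ M ∧ BlockRowCond r A τ M}.ncard := by
  rw [Aux.lhs_eq_chain r A hr τ]
  rw [Aux.chainSet_perm (Aux.perm_rev r A) τ]
  exact (Aux.rhs_eq_chain ℓ r A (by omega) hAsum τ hτ).symm
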